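/- The generating function identity ∑_{n≥0} p_{eu}^{od}(n) q^n = (∑_{n≥0} q^{n^2}) / ∏_{n≥1}(1 − q^{2n}) holds as an identity of formal power series. -/

import Mathlib

def OddDistinctGtEven (M : Multiset ℕ) : Prop :=
  (M.filter (fun x => Odd x)).Nodup ∧
  ∀ o ∈ M, Odd o → ∀ e ∈ M, Even e → e < o

def EvenGtOddDistinct (M : Multiset ℕ) : Prop :=
  (M.filter (fun x => Odd x)).Nodup ∧
  ∀ e ∈ M, Even e → ∀ o ∈ M, Odd o → o < e

/-- number of partitions of n with odd parts distinct and all greater than even parts -/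
noncomputable def peuod (n : ℕ) : ℕ := Nat.card {p : n.Partition // OddDistinctGtEven p.parts}

/-- number of partitions of n with even parts all greater than the distinct odd parts -/
noncomputable def podeu (n : ℕ) : ℕ := Nat.card {p : n.Partition // EvenGtOddDistinct p.parts}

namespace PeuodProof
open List

open List

def oddsOf : List ℕ → List ℕ
  | [] => []
  | a :: t => (2 * a + (2 * t.length + 1)) :: oddsOf t

def asOf : List ℕ → List ℕ
  | [] => []
  | o :: t => (o - (2 * t.length + 1)) / 2 :: asOf t

@[simp] lemma length_oddsOf (l : List ℕ) : (oddsOf l).length = l.length := by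
  induction l with
  | nil => rfl
  | cons a t ih => simp [oddsOf, ih]

@[simp] lemma length_asOf (l : List ℕ) : (asOf l).length = l.length := by
  induction l with
  | nil => rfl
  | cons a t ih => simp [asOf, ih]

lemma odd_mem_oddsOf {l : List ℕ} {x : ℕ} (hx : x ∈ oddsOf l) : Odd x := by
  induction l with
  | nil => simp [oddsOf] at hx
  | cons a t ih =>
    rcases (by simpa [oddsOf] using hx) with h | h
    · exact ⟨a + t.length, by omega⟩
    · exact ih h

lemma sum_oddsOf (l : List ℕ) : (oddsOf l).sum = 2 * l.sum + l.length ^ 2 := by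
  induction l with
  | nil => simp [oddsOf]
  | cons a t ih =>
    simp only [oddsOf, List.sum_cons, ih, List.length_cons]
    have : (t.length + 1) ^ 2 = t.length ^ 2 + 2 * t.length + 1 := by ring
    omega

lemma asOf_oddsOf (l : List ℕ) : asOf (oddsOf l) = l := by
  induction l with
  | nil => rfl
  | cons a t ih =>
    simp only [oddsOf, asOf, length_oddsOf, ih]
    congr 1
    omega

lemma oddsOf_le {l : List ℕ} {c : ℕ} (h : ∀ y ∈ l, y ≤ c) :
    ∀ x ∈ oddsOf l, x ≤ 2 * c + 2 * l.length - 1 := by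
  induction l with
  | nil => simp [oddsOf]
  | cons a t ih =>
    intro x hx
    rcases (by simpa [oddsOf] using hx) with h' | h'
    · have := h a (by simp)
      simp only [List.length_cons]; omega
    · have := ih (fun y hy => h y (by simp [hy])) x h'
      simp only [List.length_cons]; omega

lemma oddsOf_lower {l : List ℕ} {b : ℕ} (h : ∀ y ∈ l, b ≤ y) :
    ∀ x ∈ oddsOf l, 2 * b + 1 ≤ x := by
  induction l with
  | nil => simp [oddsOf]
  | cons a t ih =>
    intro x hx
    rcases (by simpa [oddsOf] using hx) with h' | h'
    · have := h a (by simp); omega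
    · exact ih (fun y hy => h y (by simp [hy])) x h'

lemma sorted_oddsOf {l : List ℕ} (h : l.Pairwise (· ≥ ·)) :
    (oddsOf l).Pairwise (· > ·) := by
  induction l with
  | nil => simp [oddsOf]
  | cons a t ih =>
    rw [List.pairwise_cons] at h
    simp only [oddsOf, List.pairwise_cons]
    refine ⟨?_, ih h.2⟩
    intro x hx
    have := oddsOf_le h.1 x hx
    have hne : t ≠ [] := by rintro rfl; simp [oddsOf] at hx
    have : 1 ≤ t.length := by
      cases t with | nil => simp at hne | cons _ _ => simp
    omega

lemma valid_head {o : ℕ} {t : List ℕ} (hs : (o :: t).Pairwise (· > ·))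
    (ho : ∀ x ∈ o :: t, Odd x) : 2 * t.length + 1 ≤ o := by
  induction t generalizing o with
  | nil =>
    obtain ⟨u, hu⟩ := ho o (by simp); simp; omega
  | cons b t ih =>
    rw [List.pairwise_cons] at hs
    have hb : 2 * t.length + 1 ≤ b := ih hs.2 (fun x hx => ho x (by simp at hx ⊢; tauto))
    have hob : b < o := hs.1 b (by simp)
    obtain ⟨u, hu⟩ := ho o (by simp)
    obtain ⟨v, hv⟩ := ho b (by simp [List.mem_cons])
    simp only [List.length_cons]
    omega

lemma oddsOf_asOf {l : List ℕ} (hs : l.Pairwise (· > ·)) (ho : ∀ x ∈ l, Odd x) :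
    oddsOf (asOf l) = l := by
  induction l with
  | nil => rfl
  | cons o t ih =>
    rw [List.pairwise_cons] at hs
    simp only [asOf, oddsOf, length_asOf, ih hs.2 (fun x hx => ho x (by simp [hx]))]
    congr 1
    have h1 := valid_head (List.pairwise_cons.2 hs) ho
    obtain ⟨u, hu⟩ := ho o (by simp)
    omega

lemma chain'_asOf {l : List ℕ} (hs : l.Pairwise (· > ·)) (ho : ∀ x ∈ l, Odd x) :
    (asOf l).Chain' (· ≥ ·) := by
  induction l with
  | nil => simp [asOf, List.Chain']
  | cons o t ih =>
    have ht : t.Pairwise (· > ·) := (List.pairwise_cons.1 hs).2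
    have hto : ∀ x ∈ t, Odd x := fun x hx => ho x (by simp [hx])
    cases t with
    | nil => simp [asOf, List.Chain']
    | cons b t' =>
      simp only [asOf, List.Chain', List.isChain_cons_cons]
      refine ⟨?_, by simpa [asOf, List.Chain'] using ih ht hto⟩
      have hob : b < o := (List.pairwise_cons.1 hs).1 b (by simp)
      obtain ⟨u, hu⟩ := ho o (by simp)
      obtain ⟨v, hv⟩ := ho b (by simp [List.mem_cons])
      simp only [List.length_cons, length_asOf]
      have hbbound : 2 * t'.length + 1 ≤ b := valid_head ht hto
      omega

lemma sorted_asOf {l : List ℕ} (hs : l.Pairwise (· > ·)) (ho : ∀ x ∈ l, Odd x) :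
    (asOf l).Pairwise (· ≥ ·) :=
  List.isChain_iff_pairwise.1 (chain'_asOf hs ho)

lemma sum_asOf {l : List ℕ} (hs : l.Pairwise (· > ·)) (ho : ∀ x ∈ l, Odd x) :
    l.sum = 2 * (asOf l).sum + l.length ^ 2 := by
  conv_lhs => rw [← oddsOf_asOf hs ho]
  rw [sum_oddsOf, length_asOf]

lemma filter_pos_decomp {l : List ℕ} (hs : l.Pairwise (· ≥ ·)) :
    l = l.filter (fun x => 0 < x) ++
      List.replicate (l.length - (l.filter (fun x => 0 < x)).length) 0 := by
  induction l with
  | nil => rfl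
  | cons a t ih =>
    rw [List.pairwise_cons] at hs
    by_cases ha : 0 < a
    · have : (a :: t).filter (fun x => 0 < x) = a :: t.filter (fun x => 0 < x) := by
        simp [List.filter_cons, ha]
      rw [this]
      simp only [List.length_cons, Nat.succ_sub_succ, List.cons_append]
      congr 1
      exact ih hs.2
    · have ha0 : a = 0 := by omega
      subst ha0
      have hall : ∀ x ∈ (0 : ℕ) :: t, x = 0 := by
        intro x hx
        rcases List.mem_cons.1 hx with rfl | hx
        · rfl
        · have := hs.1 x hx; omega
      have hfil : ((0:ℕ) :: t).filter (fun x => 0 < x) = [] := by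
        rw [List.filter_eq_nil_iff]
        intro x hx
        simp [hall x hx]
      rw [hfil]
      simp only [List.nil_append, List.length_nil, Nat.sub_zero]
      exact List.eq_replicate_iff.2 ⟨rfl, hall⟩

lemma sum_filter_pos (l : List ℕ) : (l.filter (fun x => 0 < x)).sum = l.sum := by
  induction l with
  | nil => rfl
  | cons a t ih =>
    by_cases ha : 0 < a <;> simp [List.filter_cons, ha, ih] <;> omega



lemma min_oddsOf : ∀ {l : List ℕ}, l.Pairwise (· ≥ ·) → l ≠ [] →
    ∃ x0 ∈ l, (2 * x0 + 1) ∈ oddsOf l ∧ ∀ x ∈ l, x0 ≤ x := by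
  intro l
  induction l with
  | nil => simp
  | cons a t ih =>
    intro hs _
    rw [List.pairwise_cons] at hs
    cases t with
    | nil => exact ⟨a, by simp, by simp [oddsOf], by simp⟩
    | cons b t' =>
      obtain ⟨x0, hx0m, hx0odd, hx0min⟩ := ih hs.2 (by simp)
      refine ⟨x0, List.mem_cons_of_mem _ hx0m, List.mem_cons_of_mem _ hx0odd, ?_⟩
      intro x hx
      rcases List.mem_cons.1 hx with rfl | hx'
      · exact le_trans (hx0min b (by simp)) (hs.1 b (by simp))
      · exact hx0min x hx'

lemma mem_one_oddsOf : ∀ {l : List ℕ}, l.Pairwise (· ≥ ·) → 0 ∈ l → 1 ∈ oddsOf l := by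
  intro l
  induction l with
  | nil => simp
  | cons a t ih =>
    intro hs h0
    rw [List.pairwise_cons] at hs
    rcases List.mem_cons.1 h0 with ha | h0'
    · cases t with
      | nil => simp [oddsOf, ← ha]
      | cons b t' =>
        have hb : b = 0 := by have := hs.1 b (by simp); omega
        exact List.mem_cons_of_mem _ (ih hs.2 (by simp [hb]))
    · exact List.mem_cons_of_mem _ (ih hs.2 h0')

lemma multiset_card_le_sum (s : Multiset ℕ) : (∀ x ∈ s, 0 < x) → Multiset.card s ≤ s.sum :=
  Multiset.induction_on s (by simp) (by
    intro a t ih h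
    simp only [Multiset.card_cons, Multiset.sum_cons]
    have h1 := h a (Multiset.mem_cons_self a t)
    have h2 := ih (fun x hx => h x (Multiset.mem_cons_of_mem hx))
    omega)

lemma even_sum_halves (s : Multiset ℕ) (h : ∀ x ∈ s, ¬ Odd x) :
    (s.map (fun x => x / 2)).map (fun x => 2 * x) = s := by
  rw [Multiset.map_map]
  have h2 : Multiset.map ((fun x => 2 * x) ∘ fun x => x / 2) s = Multiset.map id s := by
    apply Multiset.map_congr rfl
    intro x hx
    have h3 := h x hx
    rw [Nat.not_odd_iff_even] at h3
    obtain ⟨u, hu⟩ := h3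
    simp only [Function.comp_apply, id_eq]
    omega
  rw [h2, Multiset.map_id]

lemma even_sum_double (s : Multiset ℕ) (h : ∀ x ∈ s, ¬ Odd x) :
    s.sum = 2 * (s.map (fun x => x / 2)).sum := by
  conv_lhs => rw [← even_sum_halves s h]
  rw [show (fun x : ℕ => 2 * x) = (fun x : ℕ => 2 * id x) from rfl,
    Multiset.sum_map_mul_left]
  simp

lemma double_list_sum (l : List ℕ) : (l.map (fun x => 2 * x)).sum = 2 * l.sum := by
  induction l with
  | nil => simp
  | cons a t ih => simp [ih]; ring

lemma halves_list (l : List ℕ) : (l.map (fun x => 2 * x)).map (fun x => x / 2) = l := by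
  induction l with
  | nil => simp
  | cons a t ih => simp [ih]

/-- descending sort of a multiset -/
def sortDesc (s : Multiset ℕ) : List ℕ := s.sort (· ≥ ·)

@[simp] lemma coe_sortDesc (s : Multiset ℕ) : (sortDesc s : Multiset ℕ) = s :=
  Multiset.sort_eq s _

lemma sorted_sortDesc (s : Multiset ℕ) : (sortDesc s).Pairwise (· ≥ ·) :=
  Multiset.pairwise_sort s _

lemma mem_sortDesc {s : Multiset ℕ} {x : ℕ} : x ∈ sortDesc s ↔ x ∈ s := by
  rw [← Multiset.mem_coe, coe_sortDesc]

lemma length_sortDesc (s : Multiset ℕ) : (sortDesc s).length = Multiset.card s :=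
  Multiset.length_sort _

lemma sortDesc_coe {l : List ℕ} (h : l.Pairwise (· ≥ ·)) : sortDesc (l : Multiset ℕ) = l := by
  apply List.Perm.eq_of_pairwise' (sorted_sortDesc _) h
  rw [← Multiset.coe_eq_coe, coe_sortDesc]

lemma sorted_gt_of_ge_nodup {l : List ℕ} (hs : l.Pairwise (· ≥ ·)) (hn : l.Nodup) :
    l.Pairwise (· > ·) :=
  (hs.and hn).imp (fun {a b} h => lt_of_le_of_ne h.1.le h.2.symm)

section Main

variable {m : ℕ}

/-- the sorted list of odd parts -/
def Olist (p : m.Partition) : List ℕ := sortDesc (p.parts.filter (fun x => Odd x))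

lemma Olist_coe (p : m.Partition) :
    (Olist p : Multiset ℕ) = p.parts.filter (fun x => Odd x) := coe_sortDesc _

lemma Olist_sorted (p : m.Partition) : (Olist p).Pairwise (· ≥ ·) := sorted_sortDesc _

lemma Olist_odd (p : m.Partition) : ∀ x ∈ Olist p, Odd x := by
  intro x hx
  rw [Olist, mem_sortDesc] at hx
  exact (Multiset.mem_filter.1 hx).2

lemma Olist_mem (p : m.Partition) : ∀ x ∈ Olist p, x ∈ p.parts := by
  intro x hx
  rw [Olist, mem_sortDesc] at hx
  exact (Multiset.mem_filter.1 hx).1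

lemma Olist_strict {p : m.Partition} (hp : OddDistinctGtEven p.parts) :
    (Olist p).Pairwise (· > ·) := by
  apply sorted_gt_of_ge_nodup (Olist_sorted p)
  rw [← Multiset.coe_nodup, Olist_coe]
  exact hp.1

/-- the positive halves of (odd parts minus staircase) -/
def Alist (p : m.Partition) : List ℕ := (asOf (Olist p)).filter (fun x => 0 < x)

/-- even parts -/
def evens (p : m.Partition) : Multiset ℕ := p.parts.filter (fun x => ¬ Odd x)

lemma evens_even (p : m.Partition) : ∀ x ∈ evens p, ¬ Odd x := by
  intro x hx; exact (Multiset.mem_filter.1 hx).2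

lemma evens_mem (p : m.Partition) : ∀ x ∈ evens p, x ∈ p.parts := by
  intro x hx; exact (Multiset.mem_filter.1 hx).1

lemma parts_decomp (p : m.Partition) : (Olist p : Multiset ℕ) + evens p = p.parts := by
  rw [Olist_coe]
  exact Multiset.filter_add_not _ _

/-- the candidate parts of the image partition -/
def qparts (p : m.Partition) : Multiset ℕ :=
  (((Alist p).map (fun x => 2 * x) : List ℕ) : Multiset ℕ) + evens p

lemma Alist_mem (p : m.Partition) : ∀ x ∈ Alist p, x ∈ asOf (Olist p) ∧ 0 < x := by
  intro x hx
  rw [Alist, List.mem_filter] at hx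
  exact ⟨hx.1, by simpa using hx.2⟩

lemma qparts_pos (p : m.Partition) : ∀ x ∈ qparts p, 0 < x := by
  intro x hx
  rw [qparts, Multiset.mem_add] at hx
  rcases hx with hx | hx
  · rw [Multiset.mem_coe, List.mem_map] at hx
    obtain ⟨y, hy, rfl⟩ := hx
    have := (Alist_mem p y hy).2
    omega
  · exact p.parts_pos (evens_mem p x hx)

lemma qparts_even (p : m.Partition) : ∀ x ∈ qparts p, ¬ Odd x := by
  intro x hx
  rw [qparts, Multiset.mem_add] at hx
  rcases hx with hx | hx
  · rw [Multiset.mem_coe, List.mem_map] at hx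
    obtain ⟨y, hy, rfl⟩ := hx
    rw [Nat.odd_iff]
    omega
  · exact evens_even p x hx

lemma Olist_sum_eq {p : m.Partition} (hp : OddDistinctGtEven p.parts) :
    (Olist p).sum = 2 * (asOf (Olist p)).sum + (Olist p).length ^ 2 :=
  sum_asOf (Olist_strict hp) (Olist_odd p)

lemma sum_split (p : m.Partition) : (Olist p).sum + (evens p).sum = m := by
  have h := congrArg Multiset.sum (parts_decomp p)
  rw [Multiset.sum_add, Multiset.sum_coe] at h
  rw [h, p.parts_sum]

lemma Olist_sq_le {p : m.Partition} (hp : OddDistinctGtEven p.parts) :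
    (Olist p).length ^ 2 ≤ m := by
  have h1 := Olist_sum_eq hp
  have h2 := sum_split p
  omega

lemma qparts_sum {p : m.Partition} (hp : OddDistinctGtEven p.parts) :
    (qparts p).sum = m - (Olist p).length ^ 2 := by
  have h1 := Olist_sum_eq hp
  have h2 := sum_split p
  have h3 : (Alist p).sum = (asOf (Olist p)).sum := sum_filter_pos _
  rw [qparts, Multiset.sum_add, Multiset.sum_coe, double_list_sum, h3]
  omega

lemma Olist_length_le (p : m.Partition) : (Olist p).length ≤ m := by
  rw [Olist, length_sortDesc]
  calc Multiset.card (p.parts.filter (fun x => Odd x)) ≤ Multiset.card p.parts :=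
        Multiset.card_le_card (Multiset.filter_le _ _)
    _ ≤ p.parts.sum := multiset_card_le_sum _ (fun x hx => p.parts_pos hx)
    _ = m := p.parts_sum

/-- halves of an even multiset, sorted descending -/
def lhalf (q : Multiset ℕ) : List ℕ := sortDesc (q.map (fun x => x / 2))

lemma lhalf_sorted (q : Multiset ℕ) : (lhalf q).Pairwise (· ≥ ·) := sorted_sortDesc _

lemma lhalf_coe (q : Multiset ℕ) : (lhalf q : Multiset ℕ) = q.map (fun x => x / 2) :=
  coe_sortDesc _

lemma lhalf_pos {q : Multiset ℕ} (hq : ∀ x ∈ q, 0 < x ∧ ¬ Odd x) :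
    ∀ x ∈ lhalf q, 0 < x := by
  intro x hx
  rw [lhalf, mem_sortDesc, Multiset.mem_map] at hx
  obtain ⟨e, he, rfl⟩ := hx
  obtain ⟨hpos, hodd⟩ := hq e he
  rw [Nat.not_odd_iff_even] at hodd
  obtain ⟨u, hu⟩ := hodd
  omega

/-- padded staircase base -/
def aa (k : ℕ) (q : Multiset ℕ) : List ℕ :=
  (lhalf q).take k ++ List.replicate (k - (lhalf q).length) 0

lemma aa_length (k : ℕ) (q : Multiset ℕ) : (aa k q).length = k := by
  rw [aa, List.length_append, List.length_take, List.length_replicate]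
  omega

lemma aa_sorted (k : ℕ) (q : Multiset ℕ) : (aa k q).Pairwise (· ≥ ·) := by
  rw [aa, List.pairwise_append]
  refine ⟨List.Pairwise.sublist (List.take_sublist _ _) (lhalf_sorted q), ?_, ?_⟩
  · rw [List.pairwise_replicate]; right; rfl
  · intro x _ y hy
    rw [List.eq_of_mem_replicate hy]
    exact Nat.zero_le x

lemma aa_sum (k : ℕ) (q : Multiset ℕ) : (aa k q).sum = ((lhalf q).take k).sum := by
  rw [aa, List.sum_append, List.sum_replicate]
  simp

/-- parts of the partition built from `k` and an even multiset `q` -/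
def bparts (k : ℕ) (q : Multiset ℕ) : Multiset ℕ :=
  ((oddsOf (aa k q) : List ℕ) : Multiset ℕ) +
    ((((lhalf q).drop k).map (fun x => 2 * x) : List ℕ) : Multiset ℕ)

lemma bparts_filter_odd (k : ℕ) (q : Multiset ℕ) :
    (bparts k q).filter (fun x => Odd x) = ((oddsOf (aa k q) : List ℕ) : Multiset ℕ) := by
  rw [bparts, Multiset.filter_add,
    Multiset.filter_eq_self.2 (fun x hx => odd_mem_oddsOf (Multiset.mem_coe.1 hx)),
    Multiset.filter_eq_nil.2 ?_, add_zero]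
  intro x hx
  rw [Multiset.mem_coe, List.mem_map] at hx
  obtain ⟨y, _, rfl⟩ := hx
  rw [Nat.odd_iff]
  omega

lemma bparts_filter_even (k : ℕ) (q : Multiset ℕ) :
    (bparts k q).filter (fun x => ¬ Odd x) =
      ((((lhalf q).drop k).map (fun x => 2 * x) : List ℕ) : Multiset ℕ) := by
  rw [bparts, Multiset.filter_add,
    Multiset.filter_eq_nil.2
      (fun x hx => not_not_intro (odd_mem_oddsOf (Multiset.mem_coe.1 hx))),
    Multiset.filter_eq_self.2 ?_, zero_add]
  intro x hx
  rw [Multiset.mem_coe, List.mem_map] at hx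
  obtain ⟨y, _, rfl⟩ := hx
  rw [Nat.odd_iff]
  omega

lemma bparts_pos {k : ℕ} {q : Multiset ℕ} (hq : ∀ x ∈ q, 0 < x ∧ ¬ Odd x) :
    ∀ x ∈ bparts k q, 0 < x := by
  intro x hx
  rw [bparts, Multiset.mem_add] at hx
  rcases hx with hx | hx
  · obtain ⟨u, hu⟩ := odd_mem_oddsOf (Multiset.mem_coe.1 hx)
    omega
  · rw [Multiset.mem_coe, List.mem_map] at hx
    obtain ⟨y, hy, rfl⟩ := hx
    have := lhalf_pos hq y (List.mem_of_mem_drop hy)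
    omega

lemma bparts_sum {k : ℕ} {q : Multiset ℕ} (hq : ∀ x ∈ q, 0 < x ∧ ¬ Odd x) :
    (bparts k q).sum = k ^ 2 + q.sum := by
  have hts : ((lhalf q).take k).sum + ((lhalf q).drop k).sum = (lhalf q).sum := by
    rw [← List.sum_append, List.take_append_drop]
  have hl : 2 * (lhalf q).sum = q.sum := by
    have h1 := even_sum_double q (fun x hx => (hq x hx).2)
    have hcoe : (lhalf q).sum = (q.map (fun x => x / 2)).sum := by
      rw [← Multiset.sum_coe, lhalf_coe]
    omega
  rw [bparts, Multiset.sum_add, Multiset.sum_coe, Multiset.sum_coe, sum_oddsOf,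
    double_list_sum, aa_sum, aa_length]
  omega

lemma bparts_odge {k : ℕ} {q : Multiset ℕ} (hq : ∀ x ∈ q, 0 < x ∧ ¬ Odd x) :
    OddDistinctGtEven (bparts k q) := by
  constructor
  · rw [bparts_filter_odd, Multiset.coe_nodup]
    exact (sorted_oddsOf (aa_sorted k q)).imp (fun {a b} h => ne_of_gt h)
  · intro o ho hoodd e he heeven
    have homem : o ∈ oddsOf (aa k q) := by
      have h := Multiset.mem_filter.2 ⟨ho, hoodd⟩
      rw [bparts_filter_odd] at h
      exact Multiset.mem_coe.1 h
    have hemem : e ∈ ((lhalf q).drop k).map (fun x => 2 * x) := by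
      have h : e ∈ (bparts k q).filter (fun x => ¬ Odd x) := by
        refine Multiset.mem_filter.2 ⟨he, ?_⟩
        rw [Nat.not_odd_iff_even]; exact heeven
      rw [bparts_filter_even] at h
      exact Multiset.mem_coe.1 h
    rw [List.mem_map] at hemem
    obtain ⟨b, hb, rfl⟩ := hemem
    have hklen : k ≤ (lhalf q).length := by
      by_contra hcon
      rw [List.drop_eq_nil_of_le (by omega)] at hb
      simp at hb
    have haeq : aa k q = (lhalf q).take k := by
      rw [aa, Nat.sub_eq_zero_of_le hklen, List.replicate_zero, List.append_nil]
    have hcross : ∀ y ∈ (lhalf q).take k, b ≤ y := by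
      have hpw : List.Pairwise (· ≥ ·) ((lhalf q).take k ++ (lhalf q).drop k) := by
        rw [List.take_append_drop]; exact lhalf_sorted q
      intro y hy
      exact (List.pairwise_append.1 hpw).2.2 y hy b hb
    have := oddsOf_lower hcross o (haeq ▸ homem)
    omega

lemma sig_ext {N m : ℕ} {k k' : Fin N}
    {q : {q : (m - (k : ℕ) ^ 2).Partition // (k : ℕ) ^ 2 ≤ m ∧ ∀ j ∈ q.parts, ¬ Odd j}}
    {q' : {q : (m - (k' : ℕ) ^ 2).Partition // (k' : ℕ) ^ 2 ≤ m ∧ ∀ j ∈ q.parts, ¬ Odd j}}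
    (h : k = k') (hq : q.1.parts = q'.1.parts) :
    (⟨k, q⟩ : Σ k : Fin N,
      {q : (m - (k : ℕ) ^ 2).Partition // (k : ℕ) ^ 2 ≤ m ∧ ∀ j ∈ q.parts, ¬ Odd j}) =
      ⟨k', q'⟩ := by
  subst h
  congr 1
  exact Subtype.ext (Nat.Partition.ext hq)


lemma Olist_bparts {k : ℕ} {q : Multiset ℕ}
    (P : m.Partition) (hP : P.parts = bparts k q) :
    Olist P = oddsOf (aa k q) := by
  rw [Olist, hP, bparts_filter_odd]
  exact sortDesc_coe ((sorted_oddsOf (aa_sorted k q)).imp (fun {a b} h => le_of_lt h))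

lemma Olist_bparts_length {k : ℕ} {q : Multiset ℕ}
    (hq : ∀ x ∈ q, 0 < x ∧ ¬ Odd x) (P : m.Partition) (hP : P.parts = bparts k q) :
    (Olist P).length = k := by
  rw [Olist_bparts P hP, length_oddsOf, aa_length]

lemma qparts_bparts {k : ℕ} {q : Multiset ℕ}
    (hq : ∀ x ∈ q, 0 < x ∧ ¬ Odd x) (P : m.Partition) (hP : P.parts = bparts k q) :
    qparts P = q := by
  have hOP : Olist P = oddsOf (aa k q) := Olist_bparts P hP
  have hA : Alist P = (lhalf q).take k := by
    rw [Alist, hOP, asOf_oddsOf, aa, List.filter_append]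
    have h1 : (List.replicate (k - (lhalf q).length) 0).filter (fun x => 0 < x) = [] := by
      simp
    have h2 : ((lhalf q).take k).filter (fun x => 0 < x) = (lhalf q).take k := by
      rw [List.filter_eq_self]
      intro x hx
      simpa using lhalf_pos hq x (List.mem_of_mem_take hx)
    rw [h1, h2, List.append_nil]
  have hE : evens P = ((((lhalf q).drop k).map (fun x => 2 * x) : List ℕ) : Multiset ℕ) := by
    rw [evens, hP, bparts_filter_even]
  rw [qparts, hA, hE, Multiset.coe_add, ← List.map_append, List.take_append_drop,
    ← Multiset.map_coe, lhalf_coe]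
  exact even_sum_halves q (fun x hx => (hq x hx).2)

noncomputable def mainEquiv (m N : ℕ) (hmN : m < N) :
    {p : m.Partition // OddDistinctGtEven p.parts} ≃
      (Σ k : Fin N,
        {q : (m - (k : ℕ) ^ 2).Partition // (k : ℕ) ^ 2 ≤ m ∧ ∀ j ∈ q.parts, ¬ Odd j}) where
  toFun := fun pp =>
    ⟨⟨(Olist pp.1).length, lt_of_le_of_lt (Olist_length_le pp.1) hmN⟩,
      ⟨⟨qparts pp.1, fun {j} hj => qparts_pos pp.1 j hj, qparts_sum pp.2⟩,
        Olist_sq_le pp.2, fun j hj => qparts_even pp.1 j hj⟩⟩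
  invFun := fun kq =>
    ⟨⟨bparts (kq.1 : ℕ) kq.2.1.parts,
      fun {j} hj =>
        bparts_pos (fun x hx => ⟨kq.2.1.parts_pos hx, kq.2.2.2 x hx⟩) j hj, by
      rw [bparts_sum (fun x hx => ⟨kq.2.1.parts_pos hx, kq.2.2.2 x hx⟩), kq.2.1.parts_sum]
      have := kq.2.2.1
      omega⟩,
      bparts_odge (fun x hx => ⟨kq.2.1.parts_pos hx, kq.2.2.2 x hx⟩)⟩
  left_inv := by
    rintro ⟨p, hp⟩
    apply Subtype.ext
    apply Nat.Partition.ext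
    show bparts (Olist p).length (qparts p) = p.parts
    set K := (Olist p).length with hK
    set c : List ℕ := sortDesc ((evens p).map (fun x => x / 2)) with hc
    have hasorted : (asOf (Olist p)).Pairwise (· ≥ ·) :=
      sorted_asOf (Olist_strict hp) (Olist_odd p)
    have hAsorted : (Alist p).Pairwise (· ≥ ·) :=
      List.Pairwise.sublist List.filter_sublist hasorted
    -- Step 1: lhalf (qparts p) = Alist p ++ c
    have hmul : (qparts p).map (fun x => x / 2) = ((Alist p ++ c : List ℕ) : Multiset ℕ) := by
      have h1 : ((Alist p ++ c : List ℕ) : Multiset ℕ) =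
          ((Alist p : List ℕ) : Multiset ℕ) + ((c : List ℕ) : Multiset ℕ) :=
        (Multiset.coe_add _ _).symm
      rw [qparts, Multiset.map_add, h1, hc, coe_sortDesc]
      congr 1
      rw [Multiset.map_coe, halves_list]
    have hcross : ∀ x ∈ Alist p, ∀ y ∈ c, x ≥ y := by
      intro x hx y hy
      obtain ⟨hxmem, hxpos⟩ := Alist_mem p x hx
      have hne : asOf (Olist p) ≠ [] := by
        intro h; rw [h] at hxmem; simp at hxmem
      obtain ⟨x0, hx0mem, hx0odd, hx0min⟩ := min_oddsOf hasorted hne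
      rw [oddsOf_asOf (Olist_strict hp) (Olist_odd p)] at hx0odd
      have hy' : y ∈ (evens p).map (fun x => x / 2) := by
        rw [hc, mem_sortDesc] at hy; exact hy
      rw [Multiset.mem_map] at hy'
      obtain ⟨e, he, rfl⟩ := hy'
      have hee : Even e := Nat.not_odd_iff_even.1 (evens_even p e he)
      have hlt : e < 2 * x0 + 1 :=
        hp.2 _ (Olist_mem p _ hx0odd) (Olist_odd p _ hx0odd) e (evens_mem p e he) hee
      have := hx0min x hxmem
      omega
    have hsorted2 : (Alist p ++ c).Pairwise (· ≥ ·) := by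
      rw [List.pairwise_append]
      exact ⟨hAsorted, sorted_sortDesc _, hcross⟩
    have hla : lhalf (qparts p) = Alist p ++ c := by
      rw [lhalf, hmul, sortDesc_coe hsorted2]
    by_cases h0 : 0 ∈ asOf (Olist p)
    · -- all evens vanish
      have h1 : (1 : ℕ) ∈ Olist p := by
        have h2 := mem_one_oddsOf hasorted h0
        rwa [oddsOf_asOf (Olist_strict hp) (Olist_odd p)] at h2
      have hev : evens p = 0 := by
        rw [Multiset.eq_zero_iff_forall_notMem]
        intro e he
        have hee : Even e := Nat.not_odd_iff_even.1 (evens_even p e he)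
        have hlt : e < 1 := hp.2 1 (Olist_mem p _ h1) odd_one e (evens_mem p e he) hee
        have := p.parts_pos (evens_mem p e he)
        omega
      have hcnil : c = [] := by
        rw [hc, hev]
        simp [sortDesc]
      have hAlen : (Alist p).length ≤ K := by
        rw [hK, ← length_asOf (Olist p)]
        exact List.length_filter_le _ _
      have haa : aa K (qparts p) = asOf (Olist p) := by
        rw [aa, hla, hcnil, List.append_nil,
          List.take_of_length_le hAlen]
        have := filter_pos_decomp hasorted
        rw [length_asOf] at this
        exact this.symm
      rw [bparts, haa, oddsOf_asOf (Olist_strict hp) (Olist_odd p),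
        hla, hcnil, List.append_nil, List.drop_eq_nil_of_le hAlen]
      simp only [List.map_nil]
      rw [← parts_decomp p, hev]
      rfl
    · -- no zero: Alist p is all of asOf (Olist p)
      have hAeq : Alist p = asOf (Olist p) := by
        rw [Alist, List.filter_eq_self]
        intro x hx
        simp only [decide_eq_true_eq]
        by_contra hcon
        have hx0 : x = 0 := by omega
        exact h0 (hx0 ▸ hx)
      have hAlen : (Alist p).length = K := by rw [hAeq, length_asOf]
      have haa : aa K (qparts p) = asOf (Olist p) := by
        rw [aa, hla, List.take_left' hAlen]
        have : K - (Alist p ++ c).length = 0 := by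
          rw [List.length_append, hAlen]; omega
        rw [this, List.replicate_zero, List.append_nil, hAeq]
      rw [bparts, haa, oddsOf_asOf (Olist_strict hp) (Olist_odd p),
        hla, List.drop_left' hAlen]
      have hcmap : ((c.map (fun x => 2 * x) : List ℕ) : Multiset ℕ) = evens p := by
        rw [← Multiset.map_coe, hc, coe_sortDesc]
        exact even_sum_halves _ (evens_even p)
      rw [hcmap]
      exact parts_decomp p
  right_inv := by
    rintro ⟨k, q, hk, hq⟩
    have hq' : ∀ x ∈ q.parts, 0 < x ∧ ¬ Odd x := fun x hx => ⟨q.parts_pos hx, hq x hx⟩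
    refine sig_ext (Fin.ext ?_) ?_
    · exact Olist_bparts_length hq' _ rfl
    · exact qparts_bparts hq' _ rfl

end Main

open PowerSeries

noncomputable def cnt (s : Finset ℕ) (m : ℕ) : ℕ :=
  Nat.card {p : m.Partition // ∀ j ∈ p.parts, j ∈ s}

lemma parts_zero (p : (0 : ℕ).Partition) : p.parts = 0 := by
  rw [Multiset.eq_zero_iff_forall_notMem]
  intro x hx
  have h1 := p.parts_pos hx
  have h2 := p.parts_sum
  have := Multiset.single_le_sum (fun y _ => Nat.zero_le y) x hx
  omega

lemma cnt_zero (s : Finset ℕ) : cnt s 0 = 1 := by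
  have : Unique {p : (0:ℕ).Partition // ∀ j ∈ p.parts, j ∈ s} := by
    refine ⟨⟨⟨default, ?_⟩⟩, ?_⟩
    · intro j hj; rw [parts_zero] at hj; simp at hj
    · rintro ⟨p, hp⟩
      apply Subtype.ext
      apply Nat.Partition.ext
      rw [parts_zero, parts_zero]
  simp [cnt, Nat.card_unique]

lemma cnt_empty (m : ℕ) (hm : m ≠ 0) : cnt ∅ m = 0 := by
  have : IsEmpty {p : m.Partition // ∀ j ∈ p.parts, j ∈ (∅ : Finset ℕ)} := by
    refine ⟨?_⟩
    rintro ⟨p, hp⟩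
    have hne : p.parts ≠ 0 := by
      intro h
      have := p.parts_sum
      rw [h] at this
      simp at this
      omega
    obtain ⟨x, hx⟩ := Multiset.exists_mem_of_ne_zero hne
    simpa using hp x hx
  rw [cnt]
  exact Nat.card_of_isEmpty

/-- adding `j` copies of a part -/
def consPart (s : Finset ℕ) (a m : ℕ) (hpos : 0 < a) (ham : a ≤ m)
    (q : {p : (m - a).Partition // ∀ j ∈ p.parts, j ∈ insert a s}) :
    {p : m.Partition // ∀ j ∈ p.parts, j ∈ insert a s} :=
  ⟨⟨a ::ₘ q.1.parts, fun {j} hj => by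
      rcases Multiset.mem_cons.1 hj with rfl | h'
      · exact hpos
      · exact q.1.parts_pos h', by
      simp only [Multiset.sum_cons, q.1.parts_sum]; omega⟩, fun j hj => by
    rcases Multiset.mem_cons.1 hj with h' | h'
    · exact Finset.mem_insert.2 (Or.inl h')
    · exact q.2 j h'⟩

noncomputable def cntEquiv (s : Finset ℕ) (a m : ℕ) (ha : a ∉ s) (hpos : 0 < a) (ham : a ≤ m) :
    {p : m.Partition // ∀ j ∈ p.parts, j ∈ insert a s} ≃
      ({p : m.Partition // ∀ j ∈ p.parts, j ∈ s} ⊕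
        {p : (m - a).Partition // ∀ j ∈ p.parts, j ∈ insert a s}) where
  toFun := fun ⟨p, hp⟩ =>
    if h : a ∈ p.parts then
      .inr ⟨⟨p.parts.erase a, fun {j} hj => p.parts_pos (Multiset.mem_of_mem_erase hj), by
        have hc : (a ::ₘ p.parts.erase a).sum = m := by
          rw [Multiset.cons_erase h, p.parts_sum]
        rw [Multiset.sum_cons] at hc
        omega⟩, fun j hj => hp j (Multiset.mem_of_mem_erase hj)⟩
    else
      .inl ⟨p, fun j hj => by
        rcases Finset.mem_insert.1 (hp j hj) with rfl | h'
        · exact absurd hj h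
        · exact h'⟩
  invFun := fun x =>
    match x with
    | .inl pp => ⟨pp.1, fun j hj => Finset.mem_insert_of_mem (pp.2 j hj)⟩
    | .inr qq => consPart s a m hpos ham qq
  left_inv := by
    rintro ⟨p, hp⟩
    by_cases h : a ∈ p.parts
    · simp only [h, dif_pos]
      apply Subtype.ext
      apply Nat.Partition.ext
      simp only [consPart]
      exact Multiset.cons_erase h
    · simp only [h, dif_neg, not_false_iff]
  right_inv := by
    rintro (⟨p, hp⟩ | ⟨q, hq⟩)
    · have h : a ∉ p.parts := fun h => ha (hp a h)
      simp only [h, dif_neg, not_false_iff]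
    · have h : a ∈ ((consPart s a m hpos ham ⟨q, hq⟩ : {p : m.Partition // ∀ j ∈ p.parts, j ∈ insert a s}) : m.Partition).parts := by
        simp only [consPart]
        exact Multiset.mem_cons_self a _
      show (if h : a ∈ ((consPart s a m hpos ham ⟨q, hq⟩ : _) : m.Partition).parts then _ else _) = _
      rw [dif_pos h]
      congr 1
      apply Subtype.ext
      apply Nat.Partition.ext
      exact Multiset.erase_cons_head a _

lemma cnt_rec (s : Finset ℕ) (a m : ℕ) (ha : a ∉ s) (hpos : 0 < a) (ham : a ≤ m) :
    cnt (insert a s) m = cnt s m + cnt (insert a s) (m - a) := by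
  rw [cnt, Nat.card_congr (cntEquiv s a m ha hpos ham), Nat.card_sum]
  rfl

lemma cnt_gt (s : Finset ℕ) (a m : ℕ) (ham : m < a) :
    cnt (insert a s) m = cnt s m := by
  unfold cnt
  apply Nat.card_congr
  apply Equiv.subtypeEquivRight
  intro p
  constructor
  · intro hp j hj
    rcases Finset.mem_insert.1 (hp j hj) with rfl | h'
    · exfalso
      have hle : j ≤ p.parts.sum := Multiset.single_le_sum (fun y _ => Nat.zero_le y) j hj
      rw [p.parts_sum] at hle
      omega
    · exact h'
  · intro hp j hj
    exact Finset.mem_insert_of_mem (hp j hj)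

lemma cnt_gf (s : Finset ℕ) (hs : ∀ i ∈ s, 0 < i) :
    (PowerSeries.mk fun m => (cnt s m : ℤ)) * ∏ i ∈ s, (1 - PowerSeries.X ^ i) = 1 := by
  induction s using Finset.induction_on with
  | empty =>
    simp only [Finset.prod_empty, mul_one]
    ext n
    rcases Nat.eq_zero_or_pos n with rfl | hn
    · simp [cnt_zero]
    · rw [coeff_mk, coeff_one, if_neg (by omega), cnt_empty _ (by omega)]
      simp
  | @insert a s ha ih =>
    have hpos : 0 < a := hs a (Finset.mem_insert_self a s)
    rw [Finset.prod_insert ha, ← mul_assoc]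
    have key : (PowerSeries.mk fun m => (cnt (insert a s) m : ℤ)) * (1 - PowerSeries.X ^ a) =
        PowerSeries.mk fun m => (cnt s m : ℤ) := by
      ext m
      rw [mul_sub, mul_one, map_sub, coeff_mk, PowerSeries.coeff_mul_X_pow', coeff_mk]
      by_cases ham : a ≤ m
      · rw [if_pos ham, coeff_mk, cnt_rec s a m ha hpos ham]
        push_cast
        ring
      · rw [if_neg ham, cnt_gt s a m (by omega), coeff_mk]
        ring
    rw [key]
    exact ih (fun i hi => hs i (Finset.mem_insert_of_mem hi))


lemma card_fiber (n m k : ℕ) (hm : m ≤ n) :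
    Nat.card {q : (m - k ^ 2).Partition // k ^ 2 ≤ m ∧ ∀ j ∈ q.parts, ¬ Odd j} =
      if k ^ 2 ≤ m then cnt ((Finset.Icc 1 n).image (fun i => 2 * i)) (m - k ^ 2) else 0 := by
  split_ifs with h
  · rw [cnt]
    apply Nat.card_congr
    apply Equiv.subtypeEquivRight
    intro q
    constructor
    · rintro ⟨-, hall⟩ j hj
      have hjle : j ≤ m - k ^ 2 := by
        have h2 := Multiset.single_le_sum (fun y _ => Nat.zero_le y) j hj
        rw [q.parts_sum] at h2; exact h2
      have hjpos := q.parts_pos hj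
      have hje := hall j hj
      rw [Nat.not_odd_iff_even] at hje
      obtain ⟨u, hu⟩ := hje
      rw [Finset.mem_image]
      exact ⟨j / 2, Finset.mem_Icc.2 (by omega), by omega⟩
    · intro hall
      refine ⟨h, ?_⟩
      intro j hj
      have h2 := hall j hj
      rw [Finset.mem_image] at h2
      obtain ⟨i, hi, rfl⟩ := h2
      rw [Nat.odd_iff]; omega
  · have : IsEmpty {q : (m - k ^ 2).Partition // k ^ 2 ≤ m ∧ ∀ j ∈ q.parts, ¬ Odd j} :=
      ⟨fun q => h q.2.1⟩
    exact Nat.card_of_isEmpty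

lemma peuod_formula (n m : ℕ) (hm : m ≤ n) :
    peuod m = ∑ k ∈ Finset.range (n + 1),
      (if k ^ 2 ≤ m then cnt ((Finset.Icc 1 n).image (fun i => 2 * i)) (m - k ^ 2) else 0) := by
  classical
  rw [peuod, Nat.card_congr (mainEquiv m (n + 1) (by omega)),
    Nat.card_eq_fintype_card, Fintype.card_sigma,
    Fin.sum_univ_eq_sum_range (fun k =>
      Fintype.card {q : (m - k ^ 2).Partition // k ^ 2 ≤ m ∧ ∀ j ∈ q.parts, ¬ Odd j})]
  apply Finset.sum_congr rfl
  intro k _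
  rw [← Nat.card_eq_fintype_card, card_fiber n m k hm]
lemma coeff_agree {A A' B : PowerSeries ℤ} {n : ℕ}
    (h : ∀ i ≤ n, PowerSeries.coeff (R := ℤ) i A = PowerSeries.coeff (R := ℤ) i A') :
    PowerSeries.coeff (R := ℤ) n (A * B) = PowerSeries.coeff (R := ℤ) n (A' * B) := by
  rw [coeff_mul, coeff_mul]
  apply Finset.sum_congr rfl
  intro p hp
  rw [Finset.HasAntidiagonal.mem_antidiagonal] at hp
  rw [h p.1 (by omega)]

theorem peuod_genfun'' :
    ∀ n : ℕ,
      PowerSeries.coeff (R := ℤ) n ((PowerSeries.mk fun m => (peuod m : ℤ)) *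
        ∏ i ∈ Finset.Icc 1 n, (1 - PowerSeries.X ^ (2 * i))) =
      PowerSeries.coeff (R := ℤ) n (∑ k ∈ Finset.range (n + 1), PowerSeries.X ^ (k ^ 2)) := by
  intro n
  set s : Finset ℕ := (Finset.Icc 1 n).image (fun i => 2 * i) with hs_def
  have hs_pos : ∀ i ∈ s, 0 < i := by
    intro i hi
    rw [hs_def, Finset.mem_image] at hi
    obtain ⟨j, hj, rfl⟩ := hi
    rw [Finset.mem_Icc] at hj
    omega
  have hprod : ∏ i ∈ s, (1 - PowerSeries.X ^ i : PowerSeries ℤ) =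
      ∏ i ∈ Finset.Icc 1 n, (1 - PowerSeries.X ^ (2 * i)) := by
    rw [hs_def]
    exact Finset.prod_image (fun x _ y _ h => by omega)
  have hCQ : (PowerSeries.mk fun m => (cnt s m : ℤ)) *
      ∏ i ∈ Finset.Icc 1 n, (1 - PowerSeries.X ^ (2 * i)) = 1 := by
    rw [← hprod]; exact cnt_gf s hs_pos
  set C : PowerSeries ℤ := PowerSeries.mk fun m => (cnt s m : ℤ) with hC
  set Ssq : PowerSeries ℤ := ∑ k ∈ Finset.range (n + 1), PowerSeries.X ^ (k ^ 2) with hSsq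
  have key : ∀ m ≤ n, PowerSeries.coeff (R := ℤ) m (PowerSeries.mk fun m => (peuod m : ℤ)) =
      PowerSeries.coeff (R := ℤ) m (Ssq * C) := by
    intro m hm
    rw [coeff_mk, hSsq, Finset.sum_mul, map_sum]
    have hterm : ∀ k ∈ Finset.range (n + 1),
        PowerSeries.coeff (R := ℤ) m ((PowerSeries.X : PowerSeries ℤ) ^ (k ^ 2) * C) =
          (if k ^ 2 ≤ m then (cnt s (m - k ^ 2) : ℤ) else 0) := by
      intro k _
      rw [mul_comm, PowerSeries.coeff_mul_X_pow']
      split_ifs with h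
      · rw [hC, coeff_mk]
      · rfl
    rw [Finset.sum_congr rfl hterm, peuod_formula n m hm]
    push_cast [Finset.sum_ite]
    rw [← hs_def]
  calc PowerSeries.coeff (R := ℤ) n ((PowerSeries.mk fun m => (peuod m : ℤ)) *
        ∏ i ∈ Finset.Icc 1 n, (1 - PowerSeries.X ^ (2 * i)))
      = PowerSeries.coeff (R := ℤ) n ((Ssq * C) * ∏ i ∈ Finset.Icc 1 n, (1 - PowerSeries.X ^ (2 * i))) :=
        coeff_agree key
    _ = PowerSeries.coeff (R := ℤ) n (Ssq * (C * ∏ i ∈ Finset.Icc 1 n, (1 - PowerSeries.X ^ (2 * i)))) := by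
        rw [mul_assoc]
    _ = PowerSeries.coeff (R := ℤ) n Ssq := by rw [hCQ, mul_one]

end PeuodProof

theorem peuod_genfun :
    ∀ n : ℕ,
      PowerSeries.coeff (R := ℤ) n ((PowerSeries.mk fun m => (peuod m : ℤ)) *
        ∏ i ∈ Finset.Icc 1 n, (1 - PowerSeries.X ^ (2 * i))) =
      PowerSeries.coeff (R := ℤ) n (∑ k ∈ Finset.range (n + 1), PowerSeries.X ^ (k ^ 2)) :=
  PeuodProof.peuod_genfun''
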